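/- arXiv:1902.06534 — 2 statements merged into one kernel-verified Lean document; each statement's English description precedes it below -/
import Mathlib

section
/- Let K be a field of characteristic p > 0 equipped with a normalized discrete valuation v (a surjective group homomorphism v : K^× → ℤ satisfying v(x+y) ≥ min(v(x), v(y)) whenever x, y, x+y are nonzero). If γ ∈ K^× satisfies p ∤ v(γ), then there exists a finite Galois field extension L/K of degree p whose Galois group is cyclic, such that γ lies in the image of the field norm map N_{L/K} : L^× → K^×. -/
open Polynomial


theorem AS_deg_lt {p : ℕ} (hp : p.Prime) {K : Type} [Field K] (a : K) :
    degree (X + C a : K[X]) < degree (X ^ p : K[X]) := by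
  rw [degree_X_pow]
  apply lt_of_le_of_lt (degree_add_le _ _)
  have h2 : degree (C a) ≤ 1 := le_trans degree_C_le (by norm_num)
  have h3 : (1 : WithBot ℕ) < p := by exact_mod_cast Nat.one_lt_cast.mpr hp.one_lt
  simp only [degree_X, sup_lt_iff]
  exact ⟨h3, lt_of_le_of_lt h2 h3⟩

theorem AS_monic {p : ℕ} (hp : p.Prime) {K : Type} [Field K] (a : K) :
    (X ^ p - X - C a : K[X]).Monic := by
  have h : (X ^ p - X - C a : K[X]) = X ^ p - (X + C a) := by ring
  rw [h]
  exact monic_X_pow_sub (by simpa using AS_deg_lt hp a)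

theorem AS_natDegree {p : ℕ} (hp : p.Prime) {K : Type} [Field K] (a : K) :
    (X ^ p - X - C a : K[X]).natDegree = p := by
  have h : (X ^ p - X - C a : K[X]) = X ^ p - (X + C a) := by ring
  have : degree (X ^ p - X - C a : K[X]) = p := by
    rw [h, degree_sub_eq_left_of_degree_lt (AS_deg_lt hp a), degree_X_pow]
  exact natDegree_eq_of_degree_eq_some this

theorem AS_map_eq {p : ℕ} (hp : p.Prime) {K L : Type} [Field K] [Field L] [CharP K p]
    [Algebra K L] (a : K) {x : L} (hx : x ^ p - x = algebraMap K L a) :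
    (X ^ p - X - C a : K[X]).map (algebraMap K L) =
      (((Multiset.range p).map (fun i : ℕ => x + (i : L))).map (fun r => X - C r)).prod := by
  haveI : Fact p.Prime := ⟨hp⟩
  haveI : CharP L p := charP_of_injective_algebraMap (algebraMap K L).injective p
  set fm := (X ^ p - X - C a : K[X]).map (algebraMap K L) with hfm
  set g := (((Multiset.range p).map (fun i : ℕ => x + (i : L))).map (fun r => X - C r)).prod with hg
  have hi_pow : ∀ i : ℕ, (i : L) ^ p = (i : L) := by
    intro i
    induction i with
    | zero => simp [zero_pow hp.ne_zero]
    | succ n ih => push_cast; rw [add_pow_char, ih, one_pow]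
  have hmap : fm = X ^ p - X - C (algebraMap K L a) := by
    simp [hfm, Polynomial.map_sub, Polynomial.map_pow]
  have heval : ∀ i : ℕ, fm.eval (x + (i : L)) = 0 := by
    intro i
    rw [hmap]
    simp only [eval_sub, eval_pow, eval_X, eval_C]
    rw [add_pow_char, hi_pow, ← hx]; ring
  have hgmonic : g.Monic :=
    monic_multiset_prod_of_monic _ _ fun r _ => monic_X_sub_C r
  have hfmonic : fm.Monic := (AS_monic hp a).map _
  have hgdeg : g.natDegree = p := by
    rw [hg, natDegree_multiset_prod]
    · rw [Multiset.map_map]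
      simp only [Function.comp_def, natDegree_X_sub_C]
      rw [Multiset.map_map]
      simp
    · intro h
      simp only [Multiset.mem_map] at h
      obtain ⟨r, -, hr⟩ := h
      exact (X_sub_C_ne_zero r) hr
  have hfdeg : fm.natDegree = p := by
    rw [hfm, natDegree_map, AS_natDegree hp]
  have hinj : Function.Injective (fun i : Fin p => x + ((i : ℕ) : L)) := by
    intro i j hij
    simp only at hij
    have : ((i : ℕ) : L) = ((j : ℕ) : L) := add_left_cancel hij
    have := CharP.natCast_injOn_Iio L p (Set.mem_Iio.mpr i.2) (Set.mem_Iio.mpr j.2) this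
    exact Fin.ext this
  have hdiff : fm - g = 0 := by
    by_cases h0 : fm - g = 0
    · exact h0
    apply Polynomial.eq_zero_of_natDegree_lt_card_of_eval_eq_zero _ hinj
    · intro i
      simp only [eval_sub]
      rw [heval]
      have hgz : g.eval (x + ((i : ℕ) : L)) = 0 := by
        rw [hg, eval_multiset_prod]
        apply Multiset.prod_eq_zero
        rw [Multiset.map_map, Multiset.map_map]
        simp only [Multiset.mem_map, Function.comp_def]
        exact ⟨(i : ℕ), Multiset.mem_range.mpr i.2, by simp⟩
      rw [hgz, sub_zero]
    · rw [Fintype.card_fin]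
      have hlt : degree (fm - g) < degree fm := by
        apply degree_sub_lt
        · rw [degree_eq_natDegree hfmonic.ne_zero, degree_eq_natDegree hgmonic.ne_zero, hfdeg, hgdeg]
        · exact hfmonic.ne_zero
        · rw [hfmonic.leadingCoeff, hgmonic.leadingCoeff]
      rw [degree_eq_natDegree hfmonic.ne_zero, hfdeg] at hlt
      exact (natDegree_lt_iff_degree_lt h0).mpr hlt
  exact sub_eq_zero.mp hdiff

theorem AS_irreducible {p : ℕ} (hp : p.Prime) {K : Type} [Field K] [CharP K p] (a : K)
    (hA : ∀ b : K, b ^ p - b ≠ a) : Irreducible (X ^ p - X - C a : K[X]) := by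
  set f := (X ^ p - X - C a : K[X]) with hf
  have hfm : f.Monic := AS_monic hp a
  have hfd : f.natDegree = p := AS_natDegree hp a
  have hfu : ¬ IsUnit f := by
    intro h
    have := natDegree_eq_zero_of_isUnit h
    rw [hfd] at this
    exact hp.ne_zero this
  obtain ⟨g, hgm, hgi, hgd⟩ := f.exists_monic_irreducible_factor hfu
  haveI : Fact (Irreducible g) := ⟨hgi⟩
  set L := AdjoinRoot g with hL
  set x := AdjoinRoot.root g with hx
  have hgx : aeval x g = 0 := by
    rw [hx, AdjoinRoot.aeval_eq, AdjoinRoot.mk_self]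
  have hfx : aeval x f = 0 := by
    obtain ⟨h, hfh⟩ := hgd
    rw [hfh, map_mul, hgx, zero_mul]
  have hx' : x ^ p - x = algebraMap K L a := by
    have := hfx
    rw [hf] at this
    simp only [map_sub, map_pow, aeval_X, aeval_C] at this
    linear_combination this
  -- the split identity over L
  have hsplit := AS_map_eq hp a hx'
  set M := (Multiset.range p).map (fun i : ℕ => x + (i : L)) with hM
  -- show natDegree g = p
  have hd : g.natDegree = p := by
    by_contra hne
    have hdle : g.natDegree ≤ p := hfd ▸ natDegree_le_of_dvd hgd hfm.ne_zero
    have hdlt : g.natDegree < p := lt_of_le_of_ne hdle hne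
    have hdpos : 0 < g.natDegree := hgi.natDegree_pos
    set gm := g.map (algebraMap K L) with hgmap
    have hgmm : gm.Monic := hgm.map _
    have hdvd : gm ∣ f.map (algebraMap K L) := Polynomial.map_dvd _ hgd
    have hfmne : f.map (algebraMap K L) ≠ 0 := (hfm.map _).ne_zero
    have hfroots : (f.map (algebraMap K L)).roots = M := by
      rw [hsplit]
      exact roots_multiset_prod_X_sub_C M
    have hgsplits : Splits gm := by
      apply Splits.of_dvd _ hfmne hdvd
      rw [splits_iff_card_roots, hfroots, hM]
      simp [natDegree_map, hfd]
    have hgroots_le : gm.roots ≤ M := hfroots ▸ roots.le_of_dvd hfmne hdvd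
    have hgcard : Multiset.card gm.roots = g.natDegree := by
      have h1 := splits_iff_card_roots.mp hgsplits
      have h2 : gm.natDegree = g.natDegree := by rw [hgmap, natDegree_map]
      exact h1.trans h2
    -- roots sum
    have h3 := hgsplits.nextCoeff_eq_neg_sum_roots_of_monic hgmm
    have h4 : gm.nextCoeff = algebraMap K L g.nextCoeff := by
      rw [hgmap, nextCoeff_map (algebraMap K L).injective]
    have hsum : gm.roots.sum = -(algebraMap K L (g.nextCoeff)) := by
      rw [← h4, h3, neg_neg]
    set N := gm.roots.map (fun r => r - x) with hN
    have hNle : N ≤ (Multiset.range p).map (fun i : ℕ => (i : L)) := by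
      have h1 : N ≤ M.map (fun r => r - x) := Multiset.map_le_map hgroots_le
      have h2 : M.map (fun r => r - x) = (Multiset.range p).map (fun i : ℕ => (i : L)) := by
        rw [hM, Multiset.map_map]
        apply Multiset.map_congr rfl
        intro i _
        simp
      rwa [h2] at h1
    have hNbot : N.sum ∈ (⊥ : Subalgebra K L) := by
      apply Subalgebra.multiset_sum_mem
      intro r hr
      have := Multiset.mem_of_le hNle hr
      simp only [Multiset.mem_map] at this
      obtain ⟨i, -, rfl⟩ := this
      rw [show ((i : ℕ) : L) = algebraMap K L (i : K) by simp]
      exact Subalgebra.algebraMap_mem _ _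
    obtain ⟨c, hc⟩ := Algebra.mem_bot.mp hNbot
    have hroots_eq : gm.roots = N.map (fun y => y + x) := by
      rw [hN, Multiset.map_map]
      have : Multiset.map ((fun y => y + x) ∘ (fun r => r - x)) gm.roots
          = Multiset.map id gm.roots := Multiset.map_congr rfl (by intro r _; simp)
      rw [this, Multiset.map_id]
    have hsum2 : gm.roots.sum = N.sum + (g.natDegree : L) * x := by
      rw [hroots_eq]
      have : (N.map (fun y => y + x)).sum = N.sum + (Multiset.card N) • x := by
        rw [Multiset.sum_map_add]
        simp [Multiset.map_id']
      rw [this]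
      have hcardN : Multiset.card N = g.natDegree := by
        rw [hN, Multiset.card_map, hgcard]
      rw [hcardN, nsmul_eq_mul]
    -- solve for x
    have hdK : ((g.natDegree : K)) ≠ 0 := by
      rw [Ne, CharP.cast_eq_zero_iff K p]
      exact Nat.not_dvd_of_pos_of_lt hdpos hdlt
    have hdL : ((g.natDegree : L)) ≠ 0 := by
      intro h
      apply hdK
      apply (algebraMap K L).injective
      rw [map_natCast, h, map_zero]
    set b := ((g.natDegree : K))⁻¹ * (-(g.nextCoeff) - c) with hb
    have hdb : (g.natDegree : K) * b = -(g.nextCoeff) - c := by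
      rw [hb]; field_simp
    have hstep : (g.natDegree : L) * x = -(algebraMap K L g.nextCoeff) - algebraMap K L c := by
      linear_combination hsum - hsum2 + hc
    have hxbot : x = algebraMap K L b := by
      apply mul_left_cancel₀ hdL
      rw [hstep, show ((g.natDegree : L)) = algebraMap K L ((g.natDegree : K)) by simp,
        ← map_mul, hdb, map_sub, map_neg]
    apply hA b
    have : algebraMap K L (b ^ p - b) = algebraMap K L a := by
      rw [map_sub, map_pow, ← hxbot, hx']
    exact (algebraMap K L).injective this
  -- conclude f = g
  have : f = g := eq_of_monic_of_dvd_of_natDegree_le hgm hfm hgd (by rw [hfd, hd])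
  rw [this]
  exact hgi

theorem AS_key {p : ℕ} (hp : p.Prime) (K : Type) [Field K] [CharP K p] (a : K)
    (hA : ∀ b : K, b ^ p - b ≠ a) :
    ∃ (L : Type) (_ : Field L) (_ : Algebra K L),
      IsGalois K L ∧ Module.finrank K L = p ∧ IsCyclic (L ≃ₐ[K] L) ∧
        ∃ x : Lˣ, Algebra.norm K (x : L) = a := by
  haveI : Fact p.Prime := ⟨hp⟩
  set f := (X ^ p - X - C a : K[X]) with hf
  have hfm : f.Monic := AS_monic hp a
  have hfd : f.natDegree = p := AS_natDegree hp a
  have hirr : Irreducible f := AS_irreducible hp a hA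
  haveI : Fact (Irreducible f) := ⟨hirr⟩
  set L := AdjoinRoot f with hL
  set x := AdjoinRoot.root f with hx
  refine ⟨L, inferInstance, inferInstance, ?_⟩
  have hfx : aeval x f = 0 := by
    rw [hx, AdjoinRoot.aeval_eq, AdjoinRoot.mk_self]
  have hx' : x ^ p - x = algebraMap K L a := by
    have h := hfx
    simp only [hf, map_sub, map_pow, aeval_X, aeval_C] at h
    linear_combination h
  have hsplitid := AS_map_eq hp a hx'
  have hsplits : Splits (f.map (algebraMap K L)) := by
    rw [splits_iff_exists_multiset]
    exact ⟨_, by rw [leadingCoeff_map, hsplitid, hfm.leadingCoeff, map_one, C_1, one_mul]⟩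
  -- splitting field instance
  haveI : IsSplittingField K L f := by
    constructor
    · exact hsplits
    · rw [eq_top_iff, ← AdjoinRoot.adjoinRoot_eq_top (f := f)]
      apply Algebra.adjoin_mono
      intro y hy
      rw [Set.mem_singleton_iff] at hy
      subst hy
      rw [mem_rootSet]
      exact ⟨hfm.ne_zero, hfx⟩
  -- separable
  have hsep : f.Separable := by
    have hder : derivative f = -1 := by
      rw [hf]
      simp only [derivative_sub, derivative_X_pow, derivative_X, derivative_C]
      rw [CharP.cast_eq_zero K p]
      simp
    rw [Polynomial.Separable, hder]
    exact (isCoprime_one_right).neg_right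
  haveI hgal : IsGalois K L := IsGalois.of_separable_splitting_field hsep
  -- finrank
  have hfinrank : Module.finrank K L = p := by
    rw [(AdjoinRoot.powerBasis (f := f) hfm.ne_zero).finrank, AdjoinRoot.powerBasis_dim, hfd]
  haveI : FiniteDimensional K L := Module.finite_of_finrank_pos (by rw [hfinrank]; exact hp.pos)
  -- cyclic
  have hcyc : IsCyclic (L ≃ₐ[K] L) := by
    have hcard : Nat.card (L ≃ₐ[K] L) = p := by
      rw [IsGalois.card_aut_eq_finrank, hfinrank]
    exact isCyclic_of_prime_card hcard
  refine ⟨hgal, hfinrank, hcyc, ?_⟩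
  -- norm
  have ha0 : a ≠ 0 := by
    intro h
    exact hA 0 (by simp [h, zero_pow hp.ne_zero])
  have hx0 : x ≠ 0 := by
    intro h
    apply ha0
    apply (algebraMap K L).injective
    rw [map_zero, ← hx', h, zero_pow hp.ne_zero, sub_zero]
  refine ⟨Units.mk0 x hx0, ?_⟩
  have hmin : minpoly K x = f := by
    rw [hx, AdjoinRoot.minpoly_root hfm.ne_zero, hfm.leadingCoeff]
    simp
  have hnorm := Algebra.PowerBasis.norm_gen_eq_coeff_zero_minpoly
    (AdjoinRoot.powerBasis (f := f) hfm.ne_zero)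
  rw [AdjoinRoot.powerBasis_gen, AdjoinRoot.powerBasis_dim, ← hx, hmin, hfd] at hnorm
  have hcoeff : f.coeff 0 = -a := by
    rw [hf]
    simp [coeff_X_pow, hp.ne_zero, coeff_C]
    intro h
    exact absurd h.symm hp.ne_zero
  rw [Units.val_mk0, hnorm, hcoeff]
  rcases hp.eq_two_or_odd' with h2 | hodd
  · subst h2
    haveI : CharP K 2 := by assumption
    rw [neg_one_sq, one_mul]
    exact (CharTwo.neg_eq a)
  · rw [hodd.neg_one_pow]
    ring

/-- **Lemma 4.1.** Let `K` be a field of characteristic `p > 0` equipped with a normalized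
discrete valuation `v` (a surjective group homomorphism `v : Kˣ → ℤ` satisfying
`v (x + y) ≥ min (v x) (v y)` whenever `x, y, x + y` are nonzero).  If `γ ∈ Kˣ` satisfies
`p ∤ v γ`, then there exists a finite Galois field extension `L/K` of degree `p` with cyclic
Galois group such that `γ` lies in the image of the norm map `N_{L/K} : Lˣ → Kˣ`. -/
theorem norm_from_cyclic_degree_p_extension
    (p : ℕ) (hp : p.Prime) (K : Type) [Field K] [CharP K p]
    (v : Kˣ → ℤ)
    (hv_mul : ∀ x y : Kˣ, v (x * y) = v x + v y)
    (hv_surj : Function.Surjective v)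
    (hv_ultra : ∀ x y z : Kˣ, (x : K) + (y : K) = (z : K) → min (v x) (v y) ≤ v z)
    (γ : Kˣ) (hγ : ¬ ((p : ℤ) ∣ v γ)) :
    ∃ (L : Type) (_ : Field L) (_ : Algebra K L),
      IsGalois K L ∧ Module.finrank K L = p ∧ IsCyclic (L ≃ₐ[K] L) ∧
        ∃ x : Lˣ, Algebra.norm K (x : L) = (γ : K) := by
  have hv1 : v 1 = 0 := by
    have := hv_mul 1 1
    rw [one_mul] at this
    omega
  have hvinv : ∀ u : Kˣ, v u⁻¹ = - v u := by
    intro u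
    have := hv_mul u u⁻¹
    rw [mul_inv_cancel, hv1] at this
    omega
  have hvpow : ∀ (u : Kˣ) (n : ℕ), v (u ^ n) = n * v u := by
    intro u n
    induction n with
    | zero => simpa using hv1
    | succ m ih =>
      rw [pow_succ, hv_mul, ih]
      push_cast
      ring
  have hvneg : ∀ u : Kˣ, v (-u) = v u := by
    have hm1 : v (-1) = 0 := by
      have := hv_mul (-1) (-1)
      rw [neg_mul_neg, one_mul, hv1] at this
      omega
    intro u
    have := hv_mul (-1) u
    rw [neg_one_mul, hm1] at this
    omega
  have main : ∀ a : Kˣ, v a < 0 → ¬((p : ℤ) ∣ v a) → ∀ b : K, b ^ p - b ≠ (a : K) := by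
    intro a hva hpa b hb
    by_cases hb0 : b = 0
    · rw [hb0, zero_pow hp.ne_zero, sub_zero] at hb
      exact a.ne_zero hb.symm
    · set β := Units.mk0 b hb0 with hβ
      have h1 : min (v (β ^ p)) (v (-β)) ≤ v a := by
        apply hv_ultra
        rw [Units.val_neg, Units.val_pow_eq_pow_val]
        simp only [hβ, Units.val_mk0]
        linear_combination hb
      have h2 : min (v a) (v β) ≤ v (β ^ p) := by
        apply hv_ultra
        rw [Units.val_pow_eq_pow_val]
        simp only [hβ, Units.val_mk0]
        linear_combination -hb
      rw [hvpow, hvneg] at h1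
      rw [hvpow] at h2
      rcases lt_or_ge (v β) 0 with hneg | hpos
      · have h2le : (2 : ℤ) ≤ p := by exact_mod_cast hp.two_le
        have hplt : (p : ℤ) * v β < v β := by nlinarith
        have hva_eq : v a = (p : ℤ) * v β := by omega
        exact hpa ⟨v β, hva_eq⟩
      · have hpn : 0 ≤ (p : ℤ) * v β := mul_nonneg (by positivity) hpos
        omega
  rcases lt_trichotomy (v γ) 0 with hlt | heq | hgt
  · obtain ⟨L, fL, aL, hgal, hrank, hcyc, x, hx⟩ := AS_key hp K (γ : K) (main γ hlt hγ)
    exact ⟨L, fL, aL, hgal, hrank, hcyc, x, hx⟩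
  · exact absurd (heq ▸ dvd_zero _) hγ
  · have hlt' : v γ⁻¹ < 0 := by rw [hvinv]; omega
    have hp' : ¬ ((p : ℤ) ∣ v γ⁻¹) := by
      rw [hvinv]
      intro h
      exact hγ ((dvd_neg).mp h)
    obtain ⟨L, fL, aL, hgal, hrank, hcyc, x, hx⟩ :=
      AS_key hp K ((γ⁻¹ : Kˣ) : K) (main _ hlt' hp')
    refine ⟨L, fL, aL, hgal, hrank, hcyc, x⁻¹, ?_⟩
    have hmul : Algebra.norm K ((x⁻¹ : Lˣ) : L) * Algebra.norm K ((x : Lˣ) : L) = 1 := by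
      rw [← map_mul, Units.inv_mul, map_one]
    rw [hx] at hmul
    have hγK : ((γ⁻¹ : Kˣ) : K) = ((γ : K))⁻¹ := by simp
    rw [hγK] at hmul
    rw [eq_inv_of_mul_eq_one_left hmul, inv_inv]
end

section
/- Let A be a complete discrete valuation ring with fraction field F and residue field k. Let L/F be a finite field extension and let B be the integral closure of A in L; assume B is a discrete valuation ring with residue field l, that the extension is unramified, i.e., a uniformizer of A is also a uniformizer of B, and that the residue field extension l/k is separable. Then for every y ∈ l^× with N_{l/k}(y) = 1, there exists x ∈ B^× whose residue class in l is y and such that N_{L/F}(x) = 1; in other words, the reduction map from the kernel of N_{L/F} : B^× → A^× to the kernel of N_{l/k} : l^× → k^× is surjective. -/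
open IsLocalRing


namespace NormLiftAux

variable {R : Type*} [CommRing R]

lemma prod_one_add_sub_mem (I : Ideal R) {ι : Type*} [DecidableEq ι] (s : Finset ι) (x : ι → R)
    (hx : ∀ i ∈ s, x i ∈ I) :
    (∏ i ∈ s, (1 + x i)) - (1 + ∑ i ∈ s, x i) ∈ I ^ 2 := by
  induction s using Finset.induction_on with
  | empty => simp
  | @insert a t ha ih =>
    rw [Finset.prod_insert ha, Finset.sum_insert ha]
    have key : (1 + x a) * (∏ i ∈ t, (1 + x i)) - (1 + (x a + ∑ i ∈ t, x i))
        = (1 + x a) * ((∏ i ∈ t, (1 + x i)) - (1 + ∑ i ∈ t, x i))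
          + x a * (∑ i ∈ t, x i) := by ring
    rw [key]
    refine Ideal.add_mem _ (Ideal.mul_mem_left _ _ (ih fun i hi => hx i (Finset.mem_insert_of_mem hi))) ?_
    rw [pow_two]
    exact Ideal.mul_mem_mul (hx a (Finset.mem_insert_self a t))
      (Ideal.sum_mem _ fun i hi => hx i (Finset.mem_insert_of_mem hi))

lemma det_one_add_sub_mem (I : Ideal R) {n : Type*} [Fintype n] [DecidableEq n]
    (N : Matrix n n R) (h : ∀ i j, N i j ∈ I) :
    (1 + N).det - (1 + Matrix.trace N) ∈ I ^ 2 := by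
  classical
  rw [Matrix.det_apply]
  have hsplit : ∑ σ : Equiv.Perm n, Equiv.Perm.sign σ • ∏ i, (1 + N) (σ i) i
      = (Equiv.Perm.sign (1 : Equiv.Perm n) • ∏ i, (1 + N) ((1 : Equiv.Perm n) i) i)
        + ∑ σ ∈ Finset.univ.erase (1 : Equiv.Perm n),
            Equiv.Perm.sign σ • ∏ i, (1 + N) (σ i) i :=
    (Finset.add_sum_erase _ _ (Finset.mem_univ 1)).symm
  rw [hsplit]
  have hid : (Equiv.Perm.sign (1 : Equiv.Perm n) • ∏ i, (1 + N) ((1 : Equiv.Perm n) i) i)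
      = ∏ i, (1 + N i i) := by
    simp [Matrix.add_apply, Matrix.one_apply_eq]
  rw [hid]
  have h1 : (∏ i, (1 + N i i)) - (1 + Matrix.trace N) ∈ I ^ 2 := by
    simpa [Matrix.trace, Matrix.diag] using
      prod_one_add_sub_mem I Finset.univ (fun i => N i i) (fun i _ => h i i)
  have h2 : ∑ σ ∈ Finset.univ.erase (1 : Equiv.Perm n),
      Equiv.Perm.sign σ • ∏ i, (1 + N) (σ i) i ∈ I ^ 2 := by
    refine Ideal.sum_mem _ fun σ hσ => ?_
    have hσ1 : σ ≠ 1 := (Finset.mem_erase.mp hσ).1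
    have hmove : ∃ a, σ a ≠ a := by
      by_contra hall
      push_neg at hall
      exact hσ1 (Equiv.ext fun a => hall a)
    obtain ⟨a, haa⟩ := hmove
    have hb : σ (σ a) ≠ σ a := fun hh => haa (σ.injective hh)
    have hab : σ a ≠ a := haa
    have hprod : (∏ i, (1 + N) (σ i) i) ∈ I ^ 2 := by
      have h2' : (σ a) ∈ (Finset.univ : Finset n).erase a := by
        simp [Finset.mem_erase, hab]
      have e1 : (∏ i, (1 + N) (σ i) i)
          = (1 + N) (σ a) a * ∏ i ∈ Finset.univ.erase a, (1 + N) (σ i) i :=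
        (Finset.mul_prod_erase _ _ (Finset.mem_univ a)).symm
      have e2 : (∏ i ∈ Finset.univ.erase a, (1 + N) (σ i) i)
          = (1 + N) (σ (σ a)) (σ a) * ∏ i ∈ (Finset.univ.erase a).erase (σ a),
              (1 + N) (σ i) i :=
        (Finset.mul_prod_erase _ _ h2').symm
      have hNa : (1 + N) (σ a) a = N (σ a) a := by
        simp [Matrix.add_apply, Matrix.one_apply_ne hab]
      have hNb : (1 + N) (σ (σ a)) (σ a) = N (σ (σ a)) (σ a) := by
        simp [Matrix.add_apply, Matrix.one_apply_ne hb]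
      rw [e1, e2, hNa, hNb, ← mul_assoc, pow_two]
      exact Ideal.mul_mem_right _ _ (Ideal.mul_mem_mul (h _ _) (h _ _))
    exact zsmul_mem hprod _
  have : (∏ i, (1 + N i i)) - (1 + Matrix.trace N)
      + ∑ σ ∈ Finset.univ.erase (1 : Equiv.Perm n),
          Equiv.Perm.sign σ • ∏ i, (1 + N) (σ i) i ∈ I ^ 2 := Ideal.add_mem _ h1 h2
  convert this using 1
  ring

lemma det_sub_det_mem (I : Ideal R) {n : Type*} [Fintype n] [DecidableEq n]
    (M N : Matrix n n R) (h : ∀ i j, M i j - N i j ∈ I) : M.det - N.det ∈ I := by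
  rw [← Ideal.Quotient.eq_zero_iff_mem, map_sub, sub_eq_zero, RingHom.map_det, RingHom.map_det]
  congr 1
  ext i j
  simpa [RingHom.mapMatrix_apply, Matrix.map_apply, sub_eq_zero] using
    (Ideal.Quotient.eq (I := I)).mpr (h i j) |>.symm ▸ rfl

lemma exists_factor_pow (A : Type*) [CommRing A] [IsDomain A] [IsDiscreteValuationRing A]
    {π : A} (hπ : Irreducible π) {ι : Type*} (g : ι → A) {j : ι} (hj : g j ≠ 0) :
    ∃ (n : ℕ) (h : ι → A) (i₀ : ι), (∀ i, g i = π ^ n * h i) ∧ IsUnit (h i₀) := by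
  obtain ⟨m, u, hu⟩ := IsDiscreteValuationRing.eq_unit_mul_pow_irreducible hj hπ
  clear hj
  induction m generalizing g with
  | zero =>
    refine ⟨0, g, j, fun i => by simp, ?_⟩
    rw [hu, pow_zero, mul_one]; exact u.isUnit
  | succ m ih =>
    by_cases hex : ∃ i, IsUnit (g i)
    · obtain ⟨i₀, hi₀⟩ := hex
      exact ⟨0, g, i₀, fun i => by simp, hi₀⟩
    · push_neg at hex
      have hdvd : ∀ i, ∃ c, g i = π * c := by
        intro i
        have : g i ∈ maximalIdeal A := hex i
        rw [hπ.maximalIdeal_eq, Ideal.mem_span_singleton] at this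
        exact this
      choose g' hg' using hdvd
      have hj' : g' j = ↑u * π ^ m := by
        apply mul_left_cancel₀ hπ.ne_zero
        rw [← hg' j, hu, pow_succ]; ring
      obtain ⟨n, h, i₀, h1, h2⟩ := ih g' hj'
      exact ⟨n + 1, h, i₀, fun i => by rw [hg' i, h1 i, pow_succ]; ring, h2⟩

end NormLiftAux

/-- Let `A` be a complete discrete valuation ring with fraction field `F` and residue field
`k`.  Let `L/F` be a finite field extension and `B` the integral closure of `A` in `L`;
assume `B` is a discrete valuation ring with residue field `l`, that the extension is
unramified, and that `l/k` is separable.  Then every norm-one unit of `l` lifts to a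
norm-one unit of `B`: for every `y ∈ lˣ` with `N_{l/k}(y) = 1` there is `x ∈ Bˣ` reducing
to `y` with `N_{L/F}(x) = 1`. -/
theorem norm_one_unit_lifts
    (A : Type) [CommRing A] [IsDomain A] [IsDiscreteValuationRing A]
    [IsAdicComplete (maximalIdeal A) A]
    (F : Type) [Field F] [Algebra A F] [IsFractionRing A F]
    (L : Type) [Field L] [Algebra F L] [FiniteDimensional F L]
    (B : Type) [CommRing B] [IsDomain B] [IsDiscreteValuationRing B]
    [Algebra A B] [Algebra B L] [Algebra A L]
    [IsScalarTower A B L] [IsScalarTower A F L]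
    [IsIntegralClosure B A L]
    (hunram : ∃ π : A, Irreducible π ∧ Irreducible (algebraMap A B π))
    [instRF : Algebra (ResidueField A) (ResidueField B)]
    (hcomp : ∀ a : A, algebraMap (ResidueField A) (ResidueField B) (residue A a)
      = residue B (algebraMap A B a))
    [Algebra.IsSeparable (ResidueField A) (ResidueField B)]
    (y : (ResidueField B)ˣ)
    (hy : Algebra.norm (ResidueField A) ((y : ResidueField B)) = 1) :
    ∃ x : Bˣ, residue B ((x : B)) = (y : ResidueField B) ∧
      Algebra.norm F (algebraMap B L ((x : B))) = 1 := by
  classical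
  obtain ⟨π, hπ, hPi⟩ := hunram
  -- basic facts
  have hABinj : Function.Injective (algebraMap A B) := by
    have h1 : Function.Injective (algebraMap A L) := by
      rw [IsScalarTower.algebraMap_eq A F L]
      exact (algebraMap F L).injective.comp (IsFractionRing.injective A F)
    rw [IsScalarTower.algebraMap_eq A B L] at h1
    exact Function.Injective.of_comp h1
  have hsmul : ∀ (a : A) (b : B),
      residue B (a • b) = residue A a • residue B b := by
    intro a b
    rw [Algebra.smul_def, Algebra.smul_def, map_mul, ← hcomp]
  have hmA : maximalIdeal A = Ideal.span {π} := hπ.maximalIdeal_eq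
  have hmB : maximalIdeal B = Ideal.span {algebraMap A B π} := hPi.maximalIdeal_eq
  -- A-linear independence from residue independence
  haveI : Algebra.IsAlgebraic F L := Algebra.IsAlgebraic.of_finite F L
  haveI hloc : IsLocalization (Algebra.algebraMapSubmonoid B (nonZeroDivisors A)) L :=
    IsIntegralClosure.isLocalization A F L B
  have hindepA : ∀ {ι : Type} (x : ι → B),
      LinearIndependent (ResidueField A) (fun i => residue B (x i)) →
        LinearIndependent A x := by
    intro ι x hres
    rw [linearIndependent_iff'] at hres ⊢
    intro s g hsum i hi
    by_contra h0
    set gt : ι → A := fun i => if i ∈ s then g i else 0 with hgt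
    have hgtj : gt i ≠ 0 := by simpa [hgt, hi] using h0
    obtain ⟨n, h, i₀, hfac, hunit⟩ := NormLiftAux.exists_factor_pow A hπ gt hgtj
    have hi₀s : i₀ ∈ s := by
      by_contra hns
      have : (0 : A) = π ^ n * h i₀ := by simpa [hgt, hns] using hfac i₀
      have := this.symm
      rcases mul_eq_zero.mp this with h' | h'
      · exact pow_ne_zero n hπ.ne_zero h'
      · exact hunit.ne_zero h'
    have hsum2 : (π ^ n : A) • (∑ j ∈ s, h j • x j) = 0 := by
      rw [Finset.smul_sum]
      rw [← hsum]
      apply Finset.sum_congr rfl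
      intro j hj
      rw [smul_smul, ← hfac j, hgt]
      simp [hj]
    have hsum3 : (∑ j ∈ s, h j • x j) = 0 := by
      have hne : algebraMap A B (π ^ n) ≠ 0 := fun hzz =>
        pow_ne_zero n hπ.ne_zero (hABinj (by simpa using hzz))
      rw [Algebra.smul_def] at hsum2
      exact (mul_eq_zero.mp hsum2).resolve_left hne
    have hres0 : ∑ j ∈ s, residue A (h j) • residue B (x j) = 0 := by
      have := congrArg (residue B) hsum3
      rw [map_sum, map_zero] at this
      simpa [hsmul] using this
    have := hres s (fun j => residue A (h j)) hres0 i₀ hi₀s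
    exact (residue_ne_zero_iff_isUnit (h i₀)).mpr hunit this
  -- finite dimensionality of the residue extension
  have hindepF : ∀ {ι : Type} (x : ι → B), LinearIndependent A x →
      LinearIndependent F (fun i => algebraMap B L (x i)) := by
    intro ι x hx
    exact hx.localization_localization (Rₛ := F) (nonZeroDivisors A) L
  haveI hfd : FiniteDimensional (ResidueField A) (ResidueField B) := by
    set S := Module.Basis.ofVectorSpaceIndex (ResidueField A) (ResidueField B) with hS
    choose lift hlift using residue_surjective (R := B)
    set x : S → B := fun v => lift v.1 with hxdef
    have hxres : (fun v : S => residue B (x v)) = fun v : S => (v.1 : ResidueField B) := by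
      funext v; exact hlift v.1
    have hresind : LinearIndependent (ResidueField A) (fun v : S => residue B (x v)) := by
      rw [hxres]
      have := (Module.Basis.ofVectorSpace (ResidueField A) (ResidueField B)).linearIndependent
      rwa [Module.Basis.coe_ofVectorSpace] at this
    have hFind := hindepF x (hindepA x hresind)
    have : Finite S := hFind.finite
    have : Finite (Module.Basis.ofVectorSpaceIndex (ResidueField A) (ResidueField B)) := this
    exact Module.Finite.of_basis (Module.Basis.ofVectorSpace (ResidueField A) (ResidueField B))
  -- lift a basis of the residue field to a basis of B over A
  choose liftB hliftB using residue_surjective (R := B)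
  choose liftA hliftA using residue_surjective (R := A)
  set n := Module.finrank (ResidueField A) (ResidueField B) with hn
  set bl : Module.Basis (Fin n) (ResidueField A) (ResidueField B) := Module.finBasis _ _ with hbl
  set x : Fin n → B := fun i => liftB (bl i) with hxdef
  have hx : ∀ i, residue B (x i) = bl i := fun i => hliftB _
  have hpsA : ∀ m : ℕ, maximalIdeal A ^ m = Ideal.span {π ^ m} := fun m => by
    rw [hmA, Ideal.span_singleton_pow]
  have hpsB : ∀ m : ℕ, maximalIdeal B ^ m = Ideal.span {algebraMap A B π ^ m} := fun m => by
    rw [hmB, Ideal.span_singleton_pow]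
  have hstep : ∀ r : B, ∃ (a : Fin n → A) (r' : B), r = (∑ i, a i • x i) + π • r' := by
    intro r
    set a : Fin n → A := fun i => liftA (bl.repr (residue B r) i) with ha
    have h0 : residue B (r - ∑ i, a i • x i) = 0 := by
      rw [map_sub, map_sum]
      have e : ∀ i ∈ Finset.univ, residue B (a i • x i) = bl.repr (residue B r) i • bl i := by
        intro i _
        rw [hsmul, hliftA, hx]
      rw [Finset.sum_congr rfl e, Module.Basis.sum_repr bl (residue B r), sub_self]
    rw [residue_eq_zero_iff, hmB, Ideal.mem_span_singleton] at h0
    obtain ⟨r', hr'⟩ := h0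
    refine ⟨a, r', ?_⟩
    rw [Algebra.smul_def, ← hr']
    ring
  choose stepA stepR hstepEq using hstep
  have hspan : ∀ b : B, b ∈ Submodule.span A (Set.range x) := by
    intro b
    set rs : ℕ → B := fun m => stepR^[m] b with hrs
    have hrs0 : rs 0 = b := rfl
    have hrsS : ∀ m, rs (m + 1) = stepR (rs m) := fun m => Function.iterate_succ_apply' _ _ _
    set sA : ℕ → Fin n → A := fun m i => ∑ j ∈ Finset.range m, π ^ j * stepA (rs j) i with hsA
    have key : ∀ m, b - ∑ i, sA m i • x i = π ^ m • rs m := by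
      intro m
      induction m with
      | zero => simp [hsA, hrs0]
      | succ m ih =>
        have e1 : ∀ i ∈ Finset.univ, sA (m + 1) i • x i
            = sA m i • x i + (π ^ m * stepA (rs m) i) • x i := by
          intro i _
          simp only [hsA]
          rw [Finset.sum_range_succ, add_smul]
        calc b - ∑ i, sA (m + 1) i • x i
            = b - (∑ i, sA m i • x i + ∑ i, (π ^ m * stepA (rs m) i) • x i) := by
              rw [Finset.sum_congr rfl e1, Finset.sum_add_distrib]
          _ = (b - ∑ i, sA m i • x i) - π ^ m • ∑ i, stepA (rs m) i • x i := by
              rw [Finset.smul_sum]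
              have : ∀ i ∈ Finset.univ, (π ^ m * stepA (rs m) i) • x i
                  = π ^ m • stepA (rs m) i • x i := fun i _ => mul_smul _ _ _
              rw [Finset.sum_congr rfl this]
              abel
          _ = π ^ m • (rs m - ∑ i, stepA (rs m) i • x i) := by
              rw [ih, smul_sub]
          _ = π ^ m • (π • rs (m + 1)) := by
              have h2 : rs m - ∑ i, stepA (rs m) i • x i = π • stepR (rs m) := by
                nth_rewrite 1 [hstepEq (rs m)]
                rw [add_sub_cancel_left]
              rw [h2, hrsS m]
          _ = π ^ (m + 1) • rs (m + 1) := by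
              rw [smul_smul, ← pow_succ]
    have hcauchy : ∀ i, ∀ {m m' : ℕ}, m ≤ m' →
        sA m i ≡ sA m' i [SMOD (maximalIdeal A ^ m • ⊤ : Submodule A A)] := by
      intro i m m' hmm
      rw [SModEq.sub_mem, smul_eq_mul, Ideal.mul_top, hpsA]
      refine neg_mem_iff.mp ?_
      rw [neg_sub]
      have e : sA m' i - sA m i = ∑ j ∈ Finset.Ico m m', π ^ j * stepA (rs j) i := by
        simp only [hsA]
        rw [Finset.sum_Ico_eq_sub _ hmm]
      rw [e]
      refine Ideal.sum_mem _ fun j hj => ?_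
      rw [Ideal.mem_span_singleton]
      exact dvd_mul_of_dvd_left (pow_dvd_pow π (Finset.mem_Ico.mp hj).1) _
    choose cA hcA using fun i =>
      IsPrecomplete.prec (IsAdicComplete.toIsPrecomplete (I := maximalIdeal A))
        (fun {m m'} hmm => hcauchy i hmm)
    have hmem : ∀ m : ℕ, b - ∑ i, cA i • x i ∈ maximalIdeal B ^ m := by
      intro m
      have e : b - ∑ i, cA i • x i
          = (b - ∑ i, sA m i • x i) + ∑ i, (sA m i - cA i) • x i := by
        have : ∀ i ∈ Finset.univ, (sA m i - cA i) • x i = sA m i • x i - cA i • x i :=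
          fun i _ => sub_smul _ _ _
        rw [Finset.sum_congr rfl this, Finset.sum_sub_distrib]
        abel
      rw [e, hpsB]
      refine Ideal.add_mem _ ?_ (Ideal.sum_mem _ fun i _ => ?_)
      · rw [key m, Algebra.smul_def, map_pow, Ideal.mem_span_singleton]
        exact dvd_mul_right _ _
      · have hd : sA m i - cA i ∈ Ideal.span {π ^ m} := by
          rw [← hpsA]
          have := hcA i m
          rw [SModEq.sub_mem, smul_eq_mul, Ideal.mul_top] at this
          exact this
        rw [Ideal.mem_span_singleton] at hd
        obtain ⟨d, hd⟩ := hd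
        rw [hd, Ideal.mem_span_singleton]
        exact ⟨d • x i, by rw [mul_smul, Algebra.smul_def, map_pow]⟩
    have hbot : b - ∑ i, cA i • x i = 0 := by
      have h1 : b - ∑ i, cA i • x i ∈ ⨅ m : ℕ, maximalIdeal B ^ m :=
        Submodule.mem_iInf _ |>.mpr hmem
      rwa [Ideal.iInf_pow_eq_bot_of_isLocalRing _ (maximalIdeal.isMaximal B).ne_top,
        Ideal.mem_bot] at h1
    have : b = ∑ i, cA i • x i := by
      rw [← sub_eq_zero]; exact hbot
    rw [this]
    exact Submodule.sum_mem _ fun i _ =>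
      Submodule.smul_mem _ _ (Submodule.subset_span ⟨i, rfl⟩)
  have hxind : LinearIndependent A x := by
    apply hindepA
    have : (fun i => residue B (x i)) = fun i => bl i := funext hx
    rw [this]
    exact bl.linearIndependent
  set bb : Module.Basis (Fin n) A B := Module.Basis.mk hxind (fun b _ => hspan b) with hbbdef
  have hbb : ∀ i, bb i = x i := fun i => Module.Basis.mk_apply _ _ i
  -- compatibility of representations, matrices, norms and traces with reduction
  have hrepr : ∀ (w : B) (i : Fin n), bl.repr (residue B w) i = residue A (bb.repr w i) := by
    intro w i
    have hw : residue B w = ∑ j, residue A (bb.repr w j) • bl j := by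
      conv_lhs => rw [← Module.Basis.sum_repr bb w]
      rw [map_sum]
      refine Finset.sum_congr rfl fun j _ => ?_
      rw [hsmul, hbb, hx]
    rw [hw, Module.Basis.repr_sum_self]
  have hmat : ∀ (u : B) (i j : Fin n),
      Algebra.leftMulMatrix bl (residue B u) i j
        = residue A (Algebra.leftMulMatrix bb u i j) := by
    intro u i j
    rw [Algebra.leftMulMatrix_eq_repr_mul, Algebra.leftMulMatrix_eq_repr_mul, ← hrepr (u * bb j) i]
    have e : residue B (u * bb j) = residue B u * bl j := by
      rw [map_mul, hbb, hx]
    rw [e]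
  have hnormres : ∀ u : B,
      residue A (Algebra.norm A u) = Algebra.norm (ResidueField A) (residue B u) := by
    intro u
    rw [Algebra.norm_eq_matrix_det bb, Algebra.norm_eq_matrix_det bl, RingHom.map_det]
    congr 1
    ext i j
    simp only [RingHom.mapMatrix_apply, Matrix.map_apply]
    exact (hmat u i j).symm
  have htrres : ∀ u : B,
      residue A (Algebra.trace A B u)
        = Algebra.trace (ResidueField A) (ResidueField B) (residue B u) := by
    intro u
    rw [Algebra.trace_eq_matrix_trace bb, Algebra.trace_eq_matrix_trace bl,
      Matrix.trace, Matrix.trace, map_sum]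
    refine Finset.sum_congr rfl fun i _ => ?_
    exact (hmat u i i).symm
  haveI : Module.Free A B := Module.Free.of_basis bb
  haveI : Module.Finite A B := Module.Finite.of_basis bb
  have hnormloc : ∀ u : B, Algebra.norm F (algebraMap B L u) = algebraMap A F (Algebra.norm A u) :=
    fun u => Algebra.norm_localization A (nonZeroDivisors A) u
  set Pi : B := algebraMap A B π with hPidef
  -- completeness of B via coordinates
  have hcomplete : ∀ f : ℕ → B, (∀ m m' : ℕ, m ≤ m' → Pi ^ m ∣ f m' - f m) →
      ∃ z : B, ∀ m, Pi ^ m ∣ z - f m := by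
    intro f hf
    have hcoord : ∀ i : Fin n, ∀ {m m' : ℕ}, m ≤ m' →
        bb.repr (f m) i ≡ bb.repr (f m') i [SMOD (maximalIdeal A ^ m • ⊤ : Submodule A A)] := by
      intro i m m' hmm
      rw [SModEq.sub_mem, smul_eq_mul, Ideal.mul_top, hpsA, Ideal.mem_span_singleton]
      obtain ⟨v, hv⟩ := hf m m' hmm
      have e : f m - f m' = (π ^ m) • (-v) := by
        rw [smul_neg, Algebra.smul_def, map_pow, ← hv, neg_sub]
      have e2 : bb.repr (f m) i - bb.repr (f m') i = π ^ m * bb.repr (-v) i := by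
        rw [← Finsupp.sub_apply, ← map_sub, e, map_smul, Finsupp.smul_apply, smul_eq_mul]
      exact ⟨bb.repr (-v) i, e2⟩
    choose cz hcz using fun i =>
      IsPrecomplete.prec (IsAdicComplete.toIsPrecomplete (I := maximalIdeal A))
        (fun {m m'} hmm => hcoord i hmm)
    refine ⟨∑ i, cz i • bb i, fun m => ?_⟩
    have e : (∑ i, cz i • bb i) - f m = ∑ i, (cz i - bb.repr (f m) i) • bb i := by
      have h1 : ∀ i ∈ Finset.univ, (cz i - bb.repr (f m) i) • bb i
          = cz i • bb i - bb.repr (f m) i • bb i := fun i _ => sub_smul _ _ _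
      rw [Finset.sum_congr rfl h1, Finset.sum_sub_distrib, Module.Basis.sum_repr bb (f m)]
    rw [e]
    refine Finset.dvd_sum fun i _ => ?_
    have hd : π ^ m ∣ cz i - bb.repr (f m) i := by
      have h2 := hcz i m
      rw [SModEq.sub_mem, smul_eq_mul, Ideal.mul_top, hpsA, Ideal.mem_span_singleton] at h2
      rw [← neg_sub]
      exact dvd_neg.mpr h2
    obtain ⟨d, hd⟩ := hd
    rw [hd]
    exact ⟨d • bb i, by rw [mul_smul, Algebra.smul_def, map_pow]⟩
  -- one step of the norm approximation
  have htrsurj := Algebra.trace_surjective (ResidueField A) (ResidueField B)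
  have hstepnorm : ∀ m : ℕ, ∀ c : A, (π ^ (m+1) ∣ c - 1) →
      ∃ w : B, (Pi ^ (m+1) ∣ w - 1) ∧ (π ^ (m+2) ∣ Algebra.norm A w - c) := by
    intro m c hc
    obtain ⟨a, ha⟩ := hc
    obtain ⟨tbar, htbar⟩ := htrsurj (residue A a)
    obtain ⟨b0, hb0⟩ : ∃ b0 : B, residue B b0 = tbar := ⟨liftB tbar, hliftB tbar⟩
    have htr : π ∣ Algebra.trace A B b0 - a := by
      have h2 : Algebra.trace A B b0 - a ∈ maximalIdeal A := by
        have h3 : residue A (Algebra.trace A B b0 - a) = 0 := by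
          rw [map_sub, htrres, hb0, htbar, sub_self]
        rwa [residue_eq_zero_iff] at h3
      rwa [hmA, Ideal.mem_span_singleton] at h2
    set w : B := 1 + (π ^ (m+1)) • b0 with hw
    have hw1 : Pi ^ (m+1) ∣ w - 1 := by
      have e : w - 1 = Pi ^ (m+1) * b0 := by
        rw [hw, Algebra.smul_def, map_pow]; ring
      rw [e]
      exact dvd_mul_right _ _
    refine ⟨w, hw1, ?_⟩
    set N := Algebra.leftMulMatrix bb b0 with hN
    have hmatw : Algebra.leftMulMatrix bb w = 1 + (π ^ (m+1)) • N := by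
      rw [hw, map_add, map_one, map_smul]
    have hdet : Algebra.norm A w = Matrix.det (1 + (π ^ (m+1)) • N) := by
      rw [Algebra.norm_eq_matrix_det bb, hmatw]
    have hexp := NormLiftAux.det_one_add_sub_mem (Ideal.span {π ^ (m+1)}) ((π ^ (m+1)) • N)
        (fun i j => by
          rw [Matrix.smul_apply, smul_eq_mul, Ideal.mem_span_singleton]
          exact dvd_mul_right _ _)
    have htr2 : Matrix.trace ((π ^ (m+1)) • N) = π ^ (m+1) * Algebra.trace A B b0 := by
      rw [Matrix.trace_smul, smul_eq_mul, ← Algebra.trace_eq_matrix_trace bb]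
    have hsq : (Ideal.span {π ^ (m+1)} : Ideal A) ^ 2 ≤ Ideal.span {π ^ (m+2)} := by
      rw [Ideal.span_singleton_pow, Ideal.span_singleton_le_span_singleton, ← pow_mul]
      exact pow_dvd_pow π (by omega)
    have h4 : π ^ (m+2) ∣ Algebra.norm A w - (1 + π ^ (m+1) * Algebra.trace A B b0) := by
      rw [← Ideal.mem_span_singleton]
      apply hsq
      rw [hdet, ← htr2]
      exact hexp
    have h5 : Algebra.norm A w - c
        = (Algebra.norm A w - (1 + π ^ (m+1) * Algebra.trace A B b0))
          + π ^ (m+1) * (Algebra.trace A B b0 - a) + (1 + π ^ (m+1) * a - c) := by ring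
    have h6 : (1 : A) + π ^ (m+1) * a - c = 0 := by
      rw [← ha]; ring
    rw [h5, h6, add_zero]
    refine dvd_add h4 ?_
    obtain ⟨d, hdd⟩ := htr
    rw [hdd]
    exact ⟨d, by ring⟩
  -- every 1-unit of A is a norm
  have hnormone : ∀ c : A, (π ∣ c - 1) → ∃ u : B, (Pi ∣ u - 1) ∧ Algebra.norm A u = c := by
    intro c hc
    have step : ∀ (m : ℕ) (c' : {z : A // π ^ (m+1) ∣ z - 1}),
        ∃ (w : B) (c'' : A), (Pi ^ (m+1) ∣ w - 1) ∧ (π ^ (m+2) ∣ c'' - 1)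
          ∧ (c' : A) = Algebra.norm A w * c'' := by
      intro m c'
      obtain ⟨w, hw1, hw2⟩ := hstepnorm m c'.1 c'.2
      have hresw : residue B w = 1 := by
        have h3 : residue B (w - 1) = 0 := by
          rw [residue_eq_zero_iff, hmB, Ideal.mem_span_singleton]
          exact dvd_trans (dvd_pow_self Pi (Nat.succ_ne_zero m)) hw1
        rwa [map_sub, map_one, sub_eq_zero] at h3
      have hwu : IsUnit (Algebra.norm A w) := by
        apply (residue_ne_zero_iff_isUnit _).mp
        have h3 : residue A (Algebra.norm A w) = 1 := by
          rw [hnormres, hresw, map_one]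
        rw [h3]
        exact one_ne_zero
      obtain ⟨ν, hν⟩ := hwu
      refine ⟨w, (↑ν⁻¹ : A) * c'.1, hw1, ?_, ?_⟩
      · have e : (↑ν⁻¹ : A) * c'.1 - 1 = (↑ν⁻¹ : A) * (c'.1 - Algebra.norm A w) := by
          rw [mul_sub]
          congr 1
          rw [← hν, Units.inv_mul]
        rw [e]
        refine Dvd.dvd.mul_left ?_ _
        have h7 := dvd_neg.mpr hw2
        rwa [neg_sub] at h7
      · rw [← mul_assoc, ← hν, Units.mul_inv, one_mul]
    choose stepW stepC hstep1 hstep2 hstep3 using step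
    let cfun : (m : ℕ) → {z : A // π ^ (m+1) ∣ z - 1} := fun m =>
      Nat.rec (motive := fun m => {z : A // π ^ (m+1) ∣ z - 1})
        ⟨c, by simpa using hc⟩ (fun m p => ⟨stepC m p, hstep2 m p⟩) m
    have hcfS : ∀ m, (cfun (m+1)).1 = stepC m (cfun m) := fun m => rfl
    have hcf0 : (cfun 0).1 = c := rfl
    set ws : ℕ → B := fun m => stepW m (cfun m) with hws
    have hws1 : ∀ m, Pi ^ (m+1) ∣ ws m - 1 := fun m => by
      simp only [hws]
      exact hstep1 m (cfun m)
    have hws3 : ∀ m, (cfun m).1 = Algebra.norm A (ws m) * stepC m (cfun m) := fun m => by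
      simp only [hws]
      exact hstep3 m (cfun m)
    set us : ℕ → B := fun m => ∏ j ∈ Finset.range m, ws j with hus
    have hus0 : us 0 = 1 := by simp [hus]
    have husS : ∀ m, us (m+1) = us m * ws m := fun m => by
      simp only [hus]
      exact Finset.prod_range_succ _ _
    have hinv : ∀ m, Algebra.norm A (us m) * (cfun m).1 = c := by
      intro m
      induction m with
      | zero => rw [hus0, map_one, one_mul, hcf0]
      | succ m ih =>
        rw [husS, map_mul, hcfS, mul_assoc, ← hws3 m, ih]
    have hcauchy : ∀ m m' : ℕ, m ≤ m' → Pi ^ m ∣ us m' - us m := by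
      intro m m' h
      induction m', h using Nat.le_induction with
      | base => simp
      | succ m' hmm ih =>
        have e : us (m'+1) - us m = us m' * (ws m' - 1) + (us m' - us m) := by
          rw [husS]; ring
        rw [e]
        refine dvd_add ?_ ih
        exact Dvd.dvd.mul_left (dvd_trans (pow_dvd_pow Pi (by omega)) (hws1 m')) _
    obtain ⟨u, hu⟩ := hcomplete us hcauchy
    have hnormdvd : ∀ m : ℕ, π ^ m ∣ Algebra.norm A u - Algebra.norm A (us m) := by
      intro m
      obtain ⟨v, hv⟩ := hu m
      rw [← Ideal.mem_span_singleton, Algebra.norm_eq_matrix_det bb, Algebra.norm_eq_matrix_det bb]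
      refine NormLiftAux.det_sub_det_mem (Ideal.span {π ^ m})
          (Algebra.leftMulMatrix bb u) (Algebra.leftMulMatrix bb (us m)) (fun i j => ?_)
      have e2 : u - us m = (π ^ m) • v := by
        rw [hv, Algebra.smul_def, map_pow]
      have e1 : Algebra.leftMulMatrix bb u i j - Algebra.leftMulMatrix bb (us m) i j
          = π ^ m * Algebra.leftMulMatrix bb v i j := by
        rw [← Matrix.sub_apply, ← map_sub, e2, map_smul, Matrix.smul_apply, smul_eq_mul]
      rw [e1, Ideal.mem_span_singleton]
      exact dvd_mul_right _ _
    have hval : Algebra.norm A u - c = 0 := by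
      apply IsHausdorff.haus (IsAdicComplete.toIsHausdorff (I := maximalIdeal A) (M := A))
      intro m
      rw [SModEq.zero, smul_eq_mul, Ideal.mul_top, hpsA, Ideal.mem_span_singleton]
      have e : Algebra.norm A u - c
          = (Algebra.norm A u - Algebra.norm A (us m))
            + (Algebra.norm A (us m) * ((1 : A) - (cfun m).1)) := by
        have := hinv m
        rw [mul_sub, mul_one, this]
        ring
      rw [e]
      refine dvd_add (hnormdvd m) ?_
      refine Dvd.dvd.mul_left ?_ _
      have h8 := dvd_neg.mpr (cfun m).2
      rw [neg_sub] at h8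
      exact dvd_trans (pow_dvd_pow π (by omega)) h8
    refine ⟨u, ?_, sub_eq_zero.mp hval⟩
    have e : u - 1 = (u - us 1) + (ws 0 - 1) := by
      have : us 1 = ws 0 := by rw [husS 0, hus0, one_mul]
      rw [this]; ring
    rw [e]
    refine dvd_add ?_ ?_
    · simpa using hu 1
    · simpa using hws1 0
  -- assembling everything
  obtain ⟨x0, hx0⟩ : ∃ x0 : B, residue B x0 = (y : ResidueField B) := ⟨liftB _, hliftB _⟩
  have hx0u : IsUnit x0 := by
    apply (residue_ne_zero_iff_isUnit x0).mp
    rw [hx0]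
    exact Units.ne_zero y
  have hc0 : π ∣ Algebra.norm A x0 - 1 := by
    have h3 : residue A (Algebra.norm A x0 - 1) = 0 := by
      rw [map_sub, map_one, hnormres, hx0, hy, sub_self]
    rw [residue_eq_zero_iff, hmA, Ideal.mem_span_singleton] at h3
    exact h3
  obtain ⟨u, hu1, hu2⟩ := hnormone (Algebra.norm A x0) hc0
  have hresu : residue B u = 1 := by
    have h3 : residue B (u - 1) = 0 := by
      rw [residue_eq_zero_iff, hmB, Ideal.mem_span_singleton]
      exact hu1
    rwa [map_sub, map_one, sub_eq_zero] at h3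
  have huu : IsUnit u := by
    apply (residue_ne_zero_iff_isUnit u).mp
    rw [hresu]
    exact one_ne_zero
  obtain ⟨X0, hX0⟩ := hx0u
  obtain ⟨U, hU⟩ := huu
  have hUinv : residue B ((U⁻¹ : Bˣ) : B) = 1 := by
    have h1 : residue B ((U : B)) * residue B ((U⁻¹ : Bˣ) : B) = 1 := by
      rw [← map_mul, Units.mul_inv, map_one]
    rw [hU, hresu, one_mul] at h1
    exact h1
  refine ⟨X0 * U⁻¹, ?_, ?_⟩
  · rw [Units.val_mul, map_mul, hX0, hx0, hUinv, mul_one]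
  · rw [Units.val_mul, map_mul, map_mul, hnormloc, hnormloc, ← map_mul]
    have h9 : Algebra.norm A ((X0 : B)) * Algebra.norm A (((U⁻¹ : Bˣ) : B)) = 1 := by
      have h1 : Algebra.norm A ((U : B)) * Algebra.norm A (((U⁻¹ : Bˣ) : B)) = 1 := by
        rw [← map_mul, Units.mul_inv, map_one]
      rw [hU, hu2] at h1
      rw [hX0]
      exact h1
    rw [h9, map_one]
end
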